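/- arXiv:1212.5145 — 2 statements merged into one kernel-verified Lean document; each statement's English description precedes it below -/
import Mathlib

section
/- Let H be a Hilbert space and f : H → H Lipschitz with constant L > 0. If x : ℝ → H is a non-constant continuously differentiable solution of x' = f(x) which is periodic with period T > 0, then T ≥ 2π/L. -/
open Real
open scoped RealInnerProductSpace

lemma yorke_chop {φ : ℝ → ℝ} {K c : ℝ} (hc : 0 < c)
    (h : ∀ s t : ℝ, |t - s| ≤ c → |φ t - φ s| ≤ K * |t - s|) (s t : ℝ) :
    |φ t - φ s| ≤ K * |t - s| := by
  rcases le_or_gt (|t - s|) c with hle | hgt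
  · exact h s t hle
  set n : ℕ := ⌈|t - s| / c⌉₊ with hn
  have hn0 : 0 < n := by
    have : (0:ℝ) < |t - s| / c := div_pos (lt_trans hc hgt) hc
    exact Nat.ceil_pos.2 this
  have hnR : (0:ℝ) < (n:ℝ) := Nat.cast_pos.2 hn0
  have hstep : |t - s| / n ≤ c := by
    rw [div_le_iff₀ hnR]
    have := Nat.le_ceil (|t - s| / c)
    calc |t - s| = (|t - s| / c) * c := by field_simp
    _ ≤ (n : ℝ) * c := by
        apply mul_le_mul_of_nonneg_right this hc.le
    _ = c * n := by ring
  set p : ℕ → ℝ := fun i => s + i * ((t - s) / n) with hp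
  have hpn : p n = t := by
    simp only [hp]
    field_simp
    ring
  have hp0 : p 0 = s := by simp [hp]
  have htel : φ t - φ s = ∑ i ∈ Finset.range n, (φ (p (i + 1)) - φ (p i)) := by
    rw [Finset.sum_range_sub (fun i => φ (p i)), hpn, hp0]
  have hterm : ∀ i, |φ (p (i + 1)) - φ (p i)| ≤ K * (|t - s| / n) := by
    intro i
    have hd : p (i + 1) - p i = (t - s) / n := by
      simp only [hp]; push_cast; ring
    have habs : |p (i + 1) - p i| = |t - s| / n := by
      rw [hd, abs_div, abs_of_pos hnR]
    have := h (p i) (p (i + 1)) (by rw [habs]; exact hstep)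
    rwa [habs] at this
  calc |φ t - φ s| ≤ ∑ i ∈ Finset.range n, |φ (p (i + 1)) - φ (p i)| := by
        rw [htel]; exact Finset.abs_sum_le_sum_abs _ _
  _ ≤ ∑ _i ∈ Finset.range n, K * (|t - s| / n) := Finset.sum_le_sum fun i _ => hterm i
  _ = K * |t - s| := by
      rw [Finset.sum_const, Finset.card_range, nsmul_eq_mul]
      field_simp

lemma yorke_arcsin_ratio {x X : ℝ} (hx : 0 ≤ x) (hxX : x ≤ X) (hX1 : X ≤ 1) (hX0 : 0 < X) :
    arcsin x ≤ arcsin X * x / X := by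
  have hA0 : 0 ≤ arcsin X := Real.arcsin_nonneg.2 hX0.le
  have hA2 : arcsin X ≤ π / 2 := Real.arcsin_le_pi_div_two X
  set c : ℝ := x / X with hc
  have hc0 : 0 ≤ c := div_nonneg hx hX0.le
  have hc1 : c ≤ 1 := (div_le_one hX0).2 hxX
  have hkey : x ≤ sin (c * arcsin X) := by
    have hmem0 : (0:ℝ) ∈ Set.Icc 0 π := ⟨le_refl _, pi_pos.le⟩
    have hmemA : arcsin X ∈ Set.Icc 0 π :=
      ⟨hA0, le_trans hA2 (by linarith [pi_pos])⟩
    have := strictConcaveOn_sin_Icc.concaveOn.2 hmem0 hmemA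
      (by linarith : (0:ℝ) ≤ 1 - c) hc0 (by ring)
    have hsX : sin (arcsin X) = X := Real.sin_arcsin (by linarith) hX1
    simp only [smul_eq_mul, mul_zero, Real.sin_zero, zero_add, mul_comm] at this
    calc x = c * X := by rw [hc]; field_simp
    _ = (1 - c) * sin 0 + c * sin (arcsin X) := by rw [Real.sin_zero, hsX]; ring
    _ ≤ sin (c * arcsin X) := by
        have h2 := strictConcaveOn_sin_Icc.concaveOn.2 hmem0 hmemA
          (by linarith : (0:ℝ) ≤ 1 - c) hc0 (by ring)
        simpa [smul_eq_mul] using h2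
  have hbound : c * arcsin X ≤ π / 2 := by
    calc c * arcsin X ≤ 1 * (π / 2) :=
      mul_le_mul hc1 hA2 hA0 zero_le_one
    _ = π / 2 := one_mul _
  have hbound0 : 0 ≤ c * arcsin X := mul_nonneg hc0 hA0
  calc arcsin x ≤ arcsin (sin (c * arcsin X)) := Real.monotone_arcsin hkey
  _ = c * arcsin X := Real.arcsin_sin (by linarith [pi_pos]) hbound
  _ = arcsin X * x / X := by rw [hc]; ring

lemma yorke_angle_chord {H : Type*} [NormedAddCommGroup H] [InnerProductSpace ℝ H]
    (u v e : H) (hu : ‖u‖ = 1) (hv : ‖v‖ = 1) (he : ‖e‖ = 1) {δ : ℝ}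
    (hδ0 : 0 < δ) (hδ2 : δ ≤ 2) (hd : ‖u - v‖ ≤ δ) :
    |arccos ⟪u, e⟫ - arccos ⟪v, e⟫| ≤ (2 * arcsin (δ / 2) / δ) * ‖u - v‖ := by
  set a : ℝ := ⟪u, e⟫ with ha
  set b : ℝ := ⟪v, e⟫ with hb
  have ha1 : |a| ≤ 1 := by
    have := abs_real_inner_le_norm u e; rwa [hu, he, one_mul] at this
  have hb1 : |b| ≤ 1 := by
    have := abs_real_inner_le_norm v e; rwa [hv, he, one_mul] at this
  have ha1' := abs_le.1 ha1
  have hb1' := abs_le.1 hb1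
  set sa : ℝ := √(1 - a ^ 2) with hsa
  set sb : ℝ := √(1 - b ^ 2) with hsb
  have hsa2 : sa ^ 2 = 1 - a ^ 2 := Real.sq_sqrt (by nlinarith [ha1'.1, ha1'.2])
  have hsb2 : sb ^ 2 = 1 - b ^ 2 := Real.sq_sqrt (by nlinarith [hb1'.1, hb1'.2])
  set d : ℝ := ‖u - v‖ with hdd
  have hd0 : 0 ≤ d := norm_nonneg _
  -- projective chord bound
  have hproj : (a - b) ^ 2 + (sa - sb) ^ 2 ≤ d ^ 2 := by
    set u' : H := u - a • e with hu'
    set v' : H := v - b • e with hv'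
    have heu' : ⟪(a - b) • e, u' - v'⟫ = 0 := by
      have h1 : ⟪e, u'⟫ = 0 := by
        rw [hu', inner_sub_right, real_inner_smul_right,
          real_inner_self_eq_norm_sq, he, real_inner_comm]
        ring
      have h2 : ⟪e, v'⟫ = 0 := by
        rw [hv', inner_sub_right, real_inner_smul_right,
          real_inner_self_eq_norm_sq, he, real_inner_comm]
        ring
      rw [real_inner_smul_left, inner_sub_right, h1, h2]
      ring
    have hsplit : u - v = (a - b) • e + (u' - v') := by
      rw [hu', hv', sub_smul]; abel
    have hpyth : d ^ 2 = (a - b) ^ 2 * ‖e‖ ^ 2 + ‖u' - v'‖ ^ 2 := by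
      rw [hdd, hsplit, norm_add_sq_real, heu', norm_smul, Real.norm_eq_abs, mul_pow, sq_abs]
      ring
    have hnu' : ‖u'‖ = sa := by
      have : ‖u'‖ ^ 2 = 1 - a ^ 2 := by
        rw [hu', norm_sub_sq_real, real_inner_smul_right, norm_smul, hu, he,
          Real.norm_eq_abs, ← ha, mul_one, one_pow, sq_abs]
        ring
      rw [hsa, ← this, Real.sqrt_sq (norm_nonneg _)]
    have hnv' : ‖v'‖ = sb := by
      have : ‖v'‖ ^ 2 = 1 - b ^ 2 := by
        rw [hv', norm_sub_sq_real, real_inner_smul_right, norm_smul, hv, he,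
          Real.norm_eq_abs, ← hb, mul_one, one_pow, sq_abs]
        ring
      rw [hsb, ← this, Real.sqrt_sq (norm_nonneg _)]
    have htri : |sa - sb| ≤ ‖u' - v'‖ := by
      rw [← hnu', ← hnv']; exact abs_norm_sub_norm_le _ _
    have : (sa - sb) ^ 2 ≤ ‖u' - v'‖ ^ 2 := by
      rw [← sq_abs (sa - sb)]
      exact pow_le_pow_left₀ (abs_nonneg _) htri 2
    rw [hpyth, he]
    nlinarith
  -- trig identity
  set θ : ℝ := arccos a - arccos b with hθ
  have hca : cos (arccos a) = a := Real.cos_arccos ha1'.1 ha1'.2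
  have hcb : cos (arccos b) = b := Real.cos_arccos hb1'.1 hb1'.2
  have hsab : sin (arccos a) = sa := by rw [hsa, Real.sin_arccos]
  have hsbb : sin (arccos b) = sb := by rw [hsb, Real.sin_arccos]
  have hcosθ : cos θ = a * b + sa * sb := by
    rw [hθ, Real.cos_sub, hca, hcb, hsab, hsbb]
  have hidentity : (a - b) ^ 2 + (sa - sb) ^ 2 = 2 - 2 * cos θ := by
    rw [hcosθ]; linear_combination hsa2 + hsb2
  have hhalf : 2 - 2 * cos θ = 4 * sin (θ / 2) ^ 2 := by
    have h2 : cos θ = cos (2 * (θ / 2)) := by ring_nf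
    rw [h2, Real.cos_two_mul]
    linear_combination (-4 : ℝ) * Real.sin_sq_add_cos_sq (θ / 2)
  -- w := sin (|θ|/2)
  have hθπ : |θ| ≤ π := by
    have h1 := Real.arccos_nonneg a
    have h2 := Real.arccos_le_pi a
    have h3 := Real.arccos_nonneg b
    have h4 := Real.arccos_le_pi b
    rw [abs_le]; constructor <;> [linarith; linarith]
  set w : ℝ := sin (|θ| / 2) with hw
  have hw0 : 0 ≤ w :=
    Real.sin_nonneg_of_nonneg_of_le_pi (by positivity) (by linarith [abs_nonneg θ])
  have hw2 : w ^ 2 = sin (θ / 2) ^ 2 := by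
    rcases abs_cases θ with ⟨h, _⟩ | ⟨h, _⟩
    · rw [hw, h]
    · rw [hw, h, neg_div, Real.sin_neg]; ring
  have hwd : 2 * w ≤ d := by
    have h1 : 4 * sin (θ / 2) ^ 2 ≤ d ^ 2 := by linarith
    have hsq : (2 * w) ^ 2 ≤ d ^ 2 := by rw [mul_pow, hw2]; linarith
    calc 2 * w = √((2 * w) ^ 2) := (Real.sqrt_sq (by linarith)).symm
    _ ≤ √(d ^ 2) := Real.sqrt_le_sqrt hsq
    _ = d := Real.sqrt_sq hd0
  -- conclude
  have harc : |θ| = 2 * arcsin w := by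
    have : arcsin (sin (|θ| / 2)) = |θ| / 2 :=
      Real.arcsin_sin (by linarith [abs_nonneg θ, pi_pos]) (by linarith)
    rw [hw, this]; ring
  have hwδ : w ≤ δ / 2 := by linarith
  have hδ21 : δ / 2 ≤ 1 := by linarith
  have hratio : arcsin w ≤ arcsin (δ / 2) * w / (δ / 2) :=
    yorke_arcsin_ratio hw0 hwδ hδ21 (by linarith)
  have hA0 : 0 ≤ arcsin (δ / 2) := Real.arcsin_nonneg.2 (by linarith)
  calc |arccos a - arccos b| = 2 * arcsin w := harc
  _ ≤ 2 * (arcsin (δ / 2) * w / (δ / 2)) := by linarith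
  _ = (2 * arcsin (δ / 2) / δ) * (2 * w) := by field_simp
  _ ≤ (2 * arcsin (δ / 2) / δ) * d := by
      apply mul_le_mul_of_nonneg_left hwd
      positivity

lemma yorke_sphere {H : Type*} [NormedAddCommGroup H] [InnerProductSpace ℝ H]
    (u : ℝ → H) (L S : ℝ) (hS : 0 < S) (hu1 : ∀ t, ‖u t‖ = 1)
    (hLip : ∀ s t : ℝ, ‖u t - u s‖ ≤ L * |t - s|) (hanti : u S = -u 0) :
    π ≤ L * S := by
  have h2 : ‖u S - u 0‖ = 2 := by
    rw [hanti]
    have : -u 0 - u 0 = (-2 : ℝ) • u 0 := by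
      rw [neg_smul, ← one_smul ℝ (u 0)]
      module
    rw [this, norm_smul, hu1 0]
    norm_num
  have hL0 : 0 < L := by
    have := hLip 0 S
    rw [h2, sub_zero, abs_of_pos hS] at this
    nlinarith
  set φ : ℝ → ℝ := fun t => arccos ⟪u t, u 0⟫ with hφ
  have hφ0 : φ 0 = 0 := by
    have : ⟪u 0, u 0⟫ = 1 := by
      rw [real_inner_self_eq_norm_sq, hu1 0]; norm_num
    simp only [hφ, this, Real.arccos_one]
  have hφS : φ S = π := by
    have : ⟪u S, u 0⟫ = -1 := by
      rw [hanti, inner_neg_left, real_inner_self_eq_norm_sq, hu1 0]; norm_num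
    simp only [hφ, this, Real.arccos_neg_one]
  have key : ∀ δ : ℝ, 0 < δ → δ ≤ 2 → π ≤ 2 * arcsin (δ / 2) / δ * (L * S) := by
    intro δ hδ0 hδ2
    have hr0 : 0 ≤ 2 * arcsin (δ / 2) / δ := by
      have := Real.arcsin_nonneg.2 (by linarith : (0:ℝ) ≤ δ / 2)
      positivity
    have hlocal : ∀ s t : ℝ, |t - s| ≤ δ / L →
        |φ t - φ s| ≤ (2 * arcsin (δ / 2) / δ * L) * |t - s| := by
      intro s t hst
      have huv : ‖u t - u s‖ ≤ δ := by
        calc ‖u t - u s‖ ≤ L * |t - s| := hLip s t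
        _ ≤ L * (δ / L) := by
            exact mul_le_mul_of_nonneg_left hst hL0.le
        _ = δ := by field_simp
      calc |φ t - φ s| ≤ (2 * arcsin (δ / 2) / δ) * ‖u t - u s‖ :=
            yorke_angle_chord (u t) (u s) (u 0) (hu1 t) (hu1 s) (hu1 0) hδ0 hδ2 huv
      _ ≤ (2 * arcsin (δ / 2) / δ) * (L * |t - s|) :=
            mul_le_mul_of_nonneg_left (hLip s t) hr0
      _ = (2 * arcsin (δ / 2) / δ * L) * |t - s| := by ring
    have := yorke_chop (div_pos hδ0 hL0) hlocal 0 S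
    rw [hφS, hφ0, sub_zero, sub_zero, abs_of_nonneg pi_pos.le, abs_of_nonneg hS.le] at this
    calc π ≤ 2 * arcsin (δ / 2) / δ * L * S := this
    _ = 2 * arcsin (δ / 2) / δ * (L * S) := by ring
  -- limit as δ → 0⁺
  have harcsin : HasDerivAt arcsin 1 0 := by
    have := Real.hasDerivAt_arcsin (by norm_num : (0:ℝ) ≠ -1) (by norm_num : (0:ℝ) ≠ 1)
    simpa using this
  have hslope : Filter.Tendsto (slope arcsin 0) (nhdsWithin 0 {x | x ≠ 0}) (nhds 1) :=
    hasDerivAt_iff_tendsto_slope.1 harcsin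
  have hhalf : Filter.Tendsto (fun δ : ℝ => δ / 2) (nhdsWithin 0 (Set.Ioi 0))
      (nhdsWithin 0 {x | x ≠ 0}) := by
    apply tendsto_nhdsWithin_of_tendsto_nhds_of_eventually_within
    · have : Filter.Tendsto (fun δ : ℝ => δ / 2) (nhds 0) (nhds 0) :=
        (continuous_id.div_const (2:ℝ)).tendsto' 0 0 (by norm_num)
      exact this.mono_left nhdsWithin_le_nhds
    · filter_upwards [self_mem_nhdsWithin] with δ (hδ : δ ∈ Set.Ioi 0)
      exact ne_of_gt (half_pos hδ)
  have hratio : Filter.Tendsto (fun δ : ℝ => 2 * arcsin (δ / 2) / δ)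
      (nhdsWithin 0 (Set.Ioi 0)) (nhds 1) := by
    have hcomp := hslope.comp hhalf
    apply hcomp.congr'
    filter_upwards [self_mem_nhdsWithin] with δ (hδ : δ ∈ Set.Ioi 0)
    have hδ0 : (0:ℝ) < δ := hδ
    have hδne : δ ≠ 0 := hδ0.ne'
    simp only [Function.comp_apply, slope_def_field, Real.arcsin_zero]
    field_simp
    ring_nf
    field_simp
  have hfull : Filter.Tendsto (fun δ : ℝ => 2 * arcsin (δ / 2) / δ * (L * S))
      (nhdsWithin 0 (Set.Ioi 0)) (nhds (L * S)) := by
    simpa using hratio.mul_const (L * S)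
  refine ge_of_tendsto hfull ?_
  have hmem : Set.Ioc (0:ℝ) 2 ∈ nhdsWithin (0:ℝ) (Set.Ioi 0) :=
    Ioc_mem_nhdsGT_of_mem (by norm_num : (0:ℝ) ∈ Set.Ico (0:ℝ) 2)
  filter_upwards [hmem] with δ hδ
  exact key δ hδ.1 hδ.2

lemma yorke_alg {N I A L : ℝ} (hN : 0 < N) (hAL : A ^ 2 ≤ (L * N) ^ 2) :
    N⁻¹ ^ 2 * A ^ 2 + 2 * (N⁻¹ * (-(2 * I / (2 * N)) / N ^ 2)) * I
      + (-(2 * I / (2 * N)) / N ^ 2) ^ 2 * N ^ 2 ≤ L ^ 2 := by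
  have hN4 : (0:ℝ) < N ^ 4 := by positivity
  have hgoal : N⁻¹ ^ 2 * A ^ 2 + 2 * (N⁻¹ * (-(2 * I / (2 * N)) / N ^ 2)) * I
      + (-(2 * I / (2 * N)) / N ^ 2) ^ 2 * N ^ 2 = (A ^ 2 * N ^ 2 - I ^ 2) / N ^ 4 := by
    field_simp
    ring
  rw [hgoal, div_le_iff₀ hN4]
  nlinarith [sq_nonneg I, mul_le_mul_of_nonneg_right hAL (sq_nonneg N)]

set_option maxHeartbeats 1000000 in
/-- Yorke's theorem in Hilbert spaces (Busenberg–Fisher–Martelli): any non-constant periodic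
orbit of `x' = f(x)`, with `f : H → H` Lipschitz with constant `L > 0`, has period `T ≥ 2π/L`. -/
theorem yorke_period_bound {H : Type*} [NormedAddCommGroup H] [InnerProductSpace ℝ H]
    [CompleteSpace H] (f : H → H) (L : ℝ) (hL : 0 < L)
    (hf : ∀ x y : H, ‖f x - f y‖ ≤ L * ‖x - y‖)
    (x : ℝ → H) (hx : ∀ t : ℝ, HasDerivAt x (f (x t)) t)
    (T : ℝ) (hT : 0 < T) (hper : Function.Periodic x T)
    (hnonconst : ∃ s t : ℝ, x s ≠ x t) :
    T ≥ 2 * π / L := by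
  have hxc : Continuous x := continuous_iff_continuousAt.2 fun t => (hx t).continuousAt
  set P : Set ℝ := {p : ℝ | 0 < p ∧ Function.Periodic x p} with hPdef
  have hTP : T ∈ P := ⟨hT, hper⟩
  have hbdd : BddBelow P := ⟨0, fun p hp => hp.1.le⟩
  set T₀ : ℝ := sInf P with hT₀def
  have hT₀0 : 0 ≤ T₀ := le_csInf ⟨T, hTP⟩ fun p hp => hp.1.le
  have hT₀pos : 0 < T₀ := by
    rcases hT₀0.lt_or_eq with h | h
    · exact h
    exfalso
    obtain ⟨s, t, hst⟩ := hnonconst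
    have hconst : ∀ s : ℝ, x s = x 0 := by
      intro s
      apply eq_of_forall_dist_le
      intro ε hε
      obtain ⟨δ, hδ0, hδ⟩ := Metric.continuousAt_iff.1 (hx 0).continuousAt ε hε
      obtain ⟨p, hpP, hpδ⟩ : ∃ p ∈ P, p < δ := by
        have hlt : sInf P < δ := by rw [← hT₀def, ← h]; exact hδ0
        exact (csInf_lt_iff hbdd ⟨T, hTP⟩).1 hlt
      have hp0 : 0 < p := hpP.1
      set r : ℝ := s - (⌊s / p⌋ : ℤ) * p with hrdef
      have hxr : x r = x s := hpP.2.sub_int_mul_eq ⌊s / p⌋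
      have hr0 : 0 ≤ r := by
        rw [hrdef]
        have := Int.sub_floor_div_mul_nonneg s hp0
        simpa using this
      have hrp : r < p := by
        rw [hrdef]
        have := Int.sub_floor_div_mul_lt s hp0
        simpa using this
      have : dist (x r) (x 0) < ε := by
        apply hδ
        rw [Real.dist_eq, sub_zero, abs_of_nonneg hr0]
        exact lt_trans hrp hpδ
      rw [hxr] at this
      exact this.le
    exact hst (by rw [hconst s, hconst t])
  have hT₀per : Function.Periodic x T₀ := by
    obtain ⟨q, _, htend, hqP⟩ := exists_seq_tendsto_sInf ⟨T, hTP⟩ hbdd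
    intro t
    have h1 : Filter.Tendsto (fun n => x (t + q n)) Filter.atTop (nhds (x (t + T₀))) :=
      (hxc.tendsto _).comp (tendsto_const_nhds.add htend)
    have h2 : (fun n => x (t + q n)) = fun _ => x t := funext fun n => (hqP n).2 t
    rw [h2] at h1
    exact tendsto_nhds_unique h1 tendsto_const_nhds
  set S0 : ℝ := T₀ / 2 with hS0def
  have hS0pos : 0 < S0 := half_pos hT₀pos
  set y : ℝ → H := fun t => x (t + S0) - x t with hydef
  set yd : ℝ → H := fun t => f (x (t + S0)) - f (x t) with hyddef
  have hyd : ∀ t, HasDerivAt y (yd t) t := by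
    intro t
    have h1 : HasDerivAt (fun τ => x (τ + S0)) (f (x (t + S0))) t := by
      have := (hx (t + S0)).scomp t ((hasDerivAt_id t).add_const S0)
      simpa [Function.comp_def] using this
    exact h1.sub (hx t)
  have hy' : ∀ t, ‖yd t‖ ≤ L * ‖y t‖ := fun t => hf (x (t + S0)) (x t)
  have hyanti : ∀ t, y (t + S0) = -y t := by
    intro t
    have h1 : t + S0 + S0 = t + T₀ := by rw [hS0def]; ring
    simp only [hydef, h1, hT₀per t]
    abel
  -- y never vanishes
  have hy0 : ∀ t, y t ≠ 0 := by
    intro t₀ h0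
    set g : ℝ → ℝ := fun t => ⟪y t, y t⟫ with hgdef
    set dg : ℝ → ℝ := fun t => 2 * ⟪y t, yd t⟫ with hdgdef
    have hgd : ∀ t, HasDerivAt g (dg t) t := by
      intro t
      have h := (hyd t).inner ℝ (hyd t)
      refine h.congr_deriv ?_
      rw [hdgdef]
      simp only [real_inner_comm (y t) (yd t)]
      ring
    have hg0 : ∀ t, 0 ≤ g t := fun t => real_inner_self_nonneg
    have hgL : ∀ t, |dg t| ≤ 2 * L * g t := by
      intro t
      have h1 : |⟪y t, yd t⟫| ≤ ‖y t‖ * ‖yd t‖ := abs_real_inner_le_norm _ _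
      have h2 : ‖y t‖ * ‖yd t‖ ≤ ‖y t‖ * (L * ‖y t‖) :=
        mul_le_mul_of_nonneg_left (hy' t) (norm_nonneg _)
      have h3 : g t = ‖y t‖ ^ 2 := real_inner_self_eq_norm_sq _
      rw [hdgdef, abs_mul, abs_two, h3]
      nlinarith
    have hgt₀ : g t₀ = 0 := by rw [hgdef]; simp [h0]
    have hgzero : ∀ t, g t = 0 := by
      intro t
      rcases le_total t₀ t with hle | hle
      · -- forward: k = g * exp(-2L t) antitone
        set k : ℝ → ℝ := fun t => g t * Real.exp (-(2 * L) * t) with hkdef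
        have hkd : ∀ t, HasDerivAt k
            (dg t * Real.exp (-(2 * L) * t) + g t * (-(2 * L) * Real.exp (-(2 * L) * t))) t := by
          intro t
          have he : HasDerivAt (fun t => Real.exp (-(2 * L) * t))
              (-(2 * L) * Real.exp (-(2 * L) * t)) t := by
            have h0 : HasDerivAt (fun s : ℝ => -(2 * L) * s) (-(2 * L)) t := by
              simpa using (hasDerivAt_id t).const_mul (-(2 * L))
            simpa [mul_comm] using h0.exp
          exact (hgd t).mul he
        have hanti : Antitone k := by
          apply antitone_of_deriv_nonpos (fun t => (hkd t).differentiableAt)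
          intro t
          rw [(hkd t).deriv]
          have hexp := Real.exp_pos (-(2 * L) * t)
          have h1 : dg t ≤ 2 * L * g t := le_trans (le_abs_self _) (hgL t)
          nlinarith
        have : k t ≤ k t₀ := hanti hle
        rw [hkdef] at this
        simp only [hgt₀, zero_mul] at this
        have hexp := Real.exp_pos (-(2 * L) * t)
        have := hg0 t
        nlinarith
      · -- backward: m = g * exp(2L t) monotone
        set m : ℝ → ℝ := fun t => g t * Real.exp ((2 * L) * t) with hmdef
        have hmd : ∀ t, HasDerivAt m
            (dg t * Real.exp ((2 * L) * t) + g t * ((2 * L) * Real.exp ((2 * L) * t))) t := by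
          intro t
          have he : HasDerivAt (fun t => Real.exp ((2 * L) * t))
              ((2 * L) * Real.exp ((2 * L) * t)) t := by
            have h0 : HasDerivAt (fun s : ℝ => (2 * L) * s) (2 * L) t := by
              simpa using (hasDerivAt_id t).const_mul (2 * L)
            simpa [mul_comm] using h0.exp
          exact (hgd t).mul he
        have hmono : Monotone m := by
          apply monotone_of_deriv_nonneg (fun t => (hmd t).differentiableAt)
          intro t
          rw [(hmd t).deriv]
          have hexp := Real.exp_pos ((2 * L) * t)
          have h1 : -(2 * L * g t) ≤ dg t := neg_le_of_abs_le (hgL t)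
          nlinarith
        have : m t ≤ m t₀ := hmono hle
        rw [hmdef] at this
        simp only [hgt₀, zero_mul] at this
        have hexp := Real.exp_pos ((2 * L) * t)
        have := hg0 t
        nlinarith
    have hyzero : ∀ t, y t = 0 := fun t => by
      have := hgzero t
      have h2 : (⟪y t, y t⟫ : ℝ) = 0 := this
      exact inner_self_eq_zero.1 h2
    have hS0per : Function.Periodic x S0 := by
      intro t
      have := hyzero t
      rw [hydef] at this
      exact sub_eq_zero.1 this
    have : T₀ ≤ S0 := csInf_le hbdd ⟨hS0pos, hS0per⟩
    rw [hS0def] at this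
    linarith
  -- construct the unit curve u
  set q : ℝ → ℝ := fun t => ⟪y t, y t⟫ with hqdef
  have hqpos : ∀ t, 0 < q t := by
    intro t
    have : q t = ‖y t‖ ^ 2 := real_inner_self_eq_norm_sq _
    rw [this]
    exact pow_pos (norm_pos_iff.2 (hy0 t)) 2
  set n : ℝ → ℝ := fun t => √(q t) with hndef
  have hnt : ∀ t, n t = ‖y t‖ := by
    intro t
    have h1 : q t = ‖y t‖ ^ 2 := real_inner_self_eq_norm_sq _
    show √(q t) = ‖y t‖
    rw [h1, Real.sqrt_sq (norm_nonneg _)]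
  have hnpos : ∀ t, 0 < n t := fun t => by rw [hnt]; exact norm_pos_iff.2 (hy0 t)
  set u : ℝ → H := fun t => (n t)⁻¹ • y t with hudef
  set ip : ℝ → ℝ := fun t => ⟪y t, yd t⟫ with hipdef
  have hqd : ∀ t, HasDerivAt q (2 * ip t) t := by
    intro t
    have h := (hyd t).inner ℝ (hyd t)
    refine h.congr_deriv ?_
    rw [hipdef]
    simp only [real_inner_comm (y t) (yd t)]
    ring
  have hnd : ∀ t, HasDerivAt n (2 * ip t / (2 * √(q t))) t := by
    intro t
    exact (hqd t).sqrt (hqpos t).ne'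
  set D : ℝ → H := fun t => (n t)⁻¹ • yd t + (-(2 * ip t / (2 * √(q t))) / (n t) ^ 2) • y t
    with hDdef
  have hud : ∀ t, HasDerivAt u (D t) t := by
    intro t
    exact ((hnd t).inv (hnpos t).ne').smul (hyd t)
  clear_value y yd q n u ip D
  have hub : ∀ t, ‖D t‖ ≤ L := by
    intro t
    have hN : √(q t) = n t := by rw [hndef]
    have hNpos := hnpos t
    have hD2 : ‖D t‖ ^ 2 ≤ L ^ 2 := by
      rw [← real_inner_self_eq_norm_sq, hDdef]
      have hexp : ⟪(n t)⁻¹ • yd t + (-(2 * ip t / (2 * √(q t))) / (n t) ^ 2) • y t,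
          (n t)⁻¹ • yd t + (-(2 * ip t / (2 * √(q t))) / (n t) ^ 2) • y t⟫
          = (n t)⁻¹ ^ 2 * ⟪yd t, yd t⟫
            + 2 * ((n t)⁻¹ * (-(2 * ip t / (2 * √(q t))) / (n t) ^ 2)) * ip t
            + (-(2 * ip t / (2 * √(q t))) / (n t) ^ 2) ^ 2 * ⟪y t, y t⟫ := by
        simp only [real_inner_add_add_self, real_inner_smul_left, real_inner_smul_right]
        have e1 : (⟪yd t, y t⟫ : ℝ) = ⟪y t, yd t⟫ := (real_inner_comm (yd t) (y t)).symm
        have e2 : (ip t : ℝ) = ⟪y t, yd t⟫ := by rw [hipdef]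
        rw [e1, e2]
        ring
      rw [hexp, hN]
      have hyy : ⟪yd t, yd t⟫ = ‖yd t‖ ^ 2 := real_inner_self_eq_norm_sq _
      have hyL : ‖yd t‖ ^ 2 ≤ (L * n t) ^ 2 := by
        have h1 : ‖yd t‖ ≤ L * n t := by rw [hnt]; exact hy' t
        exact pow_le_pow_left₀ (norm_nonneg _) h1 2
      have hqn : (⟪y t, y t⟫ : ℝ) = n t ^ 2 := by
        rw [real_inner_self_eq_norm_sq, hnt t]
      rw [hyy, hqn]
      exact yorke_alg hNpos hyL
    calc ‖D t‖ = √(‖D t‖ ^ 2) := (Real.sqrt_sq (norm_nonneg _)).symm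
    _ ≤ √(L ^ 2) := Real.sqrt_le_sqrt hD2
    _ = L := Real.sqrt_sq hL.le
  have hLipu : ∀ s t : ℝ, ‖u t - u s‖ ≤ L * |t - s| := by
    intro s t
    have := convex_univ.norm_image_sub_le_of_norm_hasDerivWithin_le
      (f := u) (f' := D)
      (fun τ _ => (hud τ).hasDerivWithinAt) (fun τ _ => hub τ)
      (Set.mem_univ s) (Set.mem_univ t)
    simpa [Real.norm_eq_abs] using this
  have hu1 : ∀ t, ‖u t‖ = 1 := by
    intro t
    rw [hudef]
    simp only
    rw [norm_smul, norm_inv, hnt, norm_norm]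
    exact inv_mul_cancel₀ (norm_ne_zero_iff.2 (hy0 t))
  have huanti : u S0 = -u 0 := by
    have hy5 : y S0 = -y 0 := by
      have := hyanti 0
      rwa [zero_add] at this
    have hn5 : n S0 = n 0 := by
      rw [hnt, hnt, hy5, norm_neg]
    rw [hudef]
    simp only
    rw [hy5, hn5, smul_neg]
  have hsphere : π ≤ L * S0 := yorke_sphere u L S0 hS0pos hu1 hLipu huanti
  have hT₀T : T₀ ≤ T := csInf_le hbdd hTP
  rw [ge_iff_le, div_le_iff₀ hL]
  rw [hS0def] at hsphere
  nlinarith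
end

section
/- Let x : ℝ → H be a T-periodic C¹ solution of x' = f(x) with f L-Lipschitz on a Hilbert space H. Then for every h > 0, ∫₀^T ‖x(t+h) − x(t)‖² dt ≤ (LT/(2π))² ∫₀^T ‖x(t+h) − x(t)‖² dt; consequently if x is non-constant and h is chosen so that x(·+h) ≠ x(·), then LT ≥ 2π. -/
open Real MeasureTheory intervalIntegral

lemma wirtinger_complex {T : ℝ} (hT : 0 < T) {g g' : ℝ → ℂ}
    (hderiv : ∀ t, HasDerivAt g (g' t) t) (hcont' : Continuous g')
    (hper : Function.Periodic g T) (hmean : ∫ t in (0:ℝ)..T, g t = 0) :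
    ∫ t in (0:ℝ)..T, ‖g t‖ ^ 2 ≤ (T / (2 * π)) ^ 2 * ∫ t in (0:ℝ)..T, ‖g' t‖ ^ 2 := by
  haveI hTf : Fact (0 < T) := ⟨hT⟩
  have hab : (0:ℝ) < 0 + T := lt_add_of_pos_right 0 hT
  have hgc : Continuous g := continuous_iff_continuousAt.2 (fun t => (hderiv t).continuousAt)
  have hper' : Function.Periodic g' T := by
    intro t
    have h1 : HasDerivAt g (g' (t + T)) (t + T) := hderiv (t + T)
    have h2 : HasDerivAt (fun s => g (s + T)) (g' (t + T)) t := by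
      have := HasDerivAt.scomp (𝕜 := ℝ) t h1 ((hasDerivAt_id t).add_const T)
      simpa [Function.comp_def] using this
    have h3 : HasDerivAt g (g' (t + T)) t := by
      apply h2.congr_of_eventuallyEq
      filter_upwards with s using (hper s).symm
    exact h3.unique (hderiv t)
  -- identification of fourierCoeff on the circle with fourierCoeffOn
  have key : ∀ (h : ℝ → ℂ) (hp : Function.Periodic h T) (hc : Continuous h) (n : ℤ),
      fourierCoeff (⇑(⟨hp.lift, hc.quotient_liftOn' _⟩ : C(AddCircle T, ℂ))) n
        = fourierCoeffOn hab h n := by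
    intro h hp hc n
    rw [← fourierCoeff_liftIoc_eq h n]
    rw [fourierCoeff_eq_intervalIntegral _ n 0, fourierCoeff_eq_intervalIntegral _ n 0]
    congr 1
    refine intervalIntegral.integral_congr_ae (MeasureTheory.ae_of_all _ fun x hx => ?_)
    rw [Set.uIoc_of_le (le_of_lt hab)] at hx
    rw [AddCircle.liftIoc_coe_apply (by simpa using hx)]
    rfl
  -- Parseval with summability, for any continuous periodic function
  have pars : ∀ (h : ℝ → ℂ) (hp : Function.Periodic h T) (hc : Continuous h),
      (Summable fun n : ℤ => ‖fourierCoeffOn hab h n‖ ^ 2) ∧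
      T * ∑' n : ℤ, ‖fourierCoeffOn hab h n‖ ^ 2 = ∫ t in (0:ℝ)..T, ‖h t‖ ^ 2 := by
    intro h hp hc
    let H : C(AddCircle T, ℂ) := ⟨hp.lift, hc.quotient_liftOn' _⟩
    let HL := ContinuousMap.toLp (E := ℂ) 2 AddCircle.haarAddCircle ℂ H
    have h2 : ∀ n : ℤ, fourierCoeff (↑↑HL : AddCircle T → ℂ) n = fourierCoeffOn hab h n := by
      intro n; rw [fourierCoeff_toLp H n]; exact key h hp hc n
    constructor
    · have h1 := lp.hasSum_norm (p := 2) (by norm_num) ((fourierBasis (T := T)).repr HL)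
      refine (summable_congr ?_).mp h1.summable
      intro n
      rw [fourierBasis_repr, h2 n]
      norm_num
    · have h1 := tsum_sq_fourierCoeff HL
      simp_rw [h2] at h1
      have h3 : (∫ t : AddCircle T, ‖(↑↑HL : AddCircle T → ℂ) t‖ ^ 2 ∂AddCircle.haarAddCircle)
          = ∫ t : AddCircle T, ‖H t‖ ^ 2 ∂AddCircle.haarAddCircle := by
        refine integral_congr_ae ?_
        filter_upwards [ContinuousMap.coeFn_toLp (p := 2) (𝕜 := ℂ) AddCircle.haarAddCircle H]
          with t ht
        rw [show (↑↑HL : AddCircle T → ℂ) t = H t from ht]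
      rw [h1, h3]
      have h4 : ∫ t in (0:ℝ)..T, ‖h t‖ ^ 2 = ∫ a in (0:ℝ)..0 + T, ‖H (a : AddCircle T)‖ ^ 2 := by
        rw [zero_add]; rfl
      rw [h4, AddCircle.intervalIntegral_preimage T 0 (fun b => ‖H b‖ ^ 2)]
      rw [AddCircle.volume_eq_smul_haarAddCircle (T := T),
        MeasureTheory.integral_smul_measure, ENNReal.toReal_ofReal hT.le, smul_eq_mul]
  obtain ⟨hsg, hpg⟩ := pars g hper hgc
  obtain ⟨hsg', hpg'⟩ := pars g' hper' hcont'
  -- coefficient of g at 0 vanishes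
  have hzero : fourierCoeffOn hab g 0 = 0 := by
    rw [fourierCoeffOn_eq_integral]
    simp only [neg_zero, fourier_zero, one_smul, zero_add, sub_zero]
    rw [hmean, smul_zero]
  -- termwise inequality
  have hterm : ∀ n : ℤ, ‖fourierCoeffOn hab g n‖ ^ 2
      ≤ (T / (2 * π)) ^ 2 * ‖fourierCoeffOn hab g' n‖ ^ 2 := by
    intro n
    rcases eq_or_ne n 0 with rfl | hn
    · rw [hzero]
      simp only [norm_zero, ne_eq, OfNat.ofNat_ne_zero, not_false_eq_true, zero_pow]
      positivity
    · have hd := fourierCoeffOn_of_hasDerivAt hab hn (fun t _ => hderiv t)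
        (hcont'.intervalIntegrable 0 (0 + T))
      rw [show g (0 + T) - g 0 = 0 by rw [hper 0, sub_self], mul_zero, zero_sub] at hd
      have hnorm : ‖fourierCoeffOn hab g n‖
          = T / (2 * π * |(n : ℝ)|) * ‖fourierCoeffOn hab g' n‖ := by
        rw [hd, norm_mul, norm_neg, norm_mul, norm_div, norm_one]
        simp only [norm_mul, Complex.norm_I, Complex.norm_real]
        norm_num [abs_of_pos pi_pos]
        rw [abs_of_pos hT]
        ring_nf
      rw [hnorm, mul_pow]
      have h1 : (1:ℝ) ≤ |(n:ℝ)| := by exact_mod_cast Int.one_le_abs hn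
      have h2 : T / (2 * π * |(n : ℝ)|) ≤ T / (2 * π) := by
        apply div_le_div_of_nonneg_left hT.le (by positivity)
        nlinarith [pi_pos]
      have h3 : (0:ℝ) ≤ T / (2 * π * |(n : ℝ)|) := by positivity
      exact mul_le_mul_of_nonneg_right (pow_le_pow_left₀ h3 h2 2) (by positivity)
  -- assemble
  have hts : ∑' n : ℤ, ‖fourierCoeffOn hab g n‖ ^ 2
      ≤ (T / (2 * π)) ^ 2 * ∑' n : ℤ, ‖fourierCoeffOn hab g' n‖ ^ 2 := by
    rw [← tsum_mul_left]
    exact Summable.tsum_le_tsum hterm hsg (hsg'.mul_left _)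
  calc ∫ t in (0:ℝ)..T, ‖g t‖ ^ 2 = T * ∑' n : ℤ, ‖fourierCoeffOn hab g n‖ ^ 2 := hpg.symm
    _ ≤ T * ((T / (2 * π)) ^ 2 * ∑' n : ℤ, ‖fourierCoeffOn hab g' n‖ ^ 2) :=
        mul_le_mul_of_nonneg_left hts hT.le
    _ = (T / (2 * π)) ^ 2 * (T * ∑' n : ℤ, ‖fourierCoeffOn hab g' n‖ ^ 2) := by ring
    _ = (T / (2 * π)) ^ 2 * ∫ t in (0:ℝ)..T, ‖g' t‖ ^ 2 := by rw [hpg']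

lemma wirtinger_real {T : ℝ} (hT : 0 < T) {g g' : ℝ → ℝ}
    (hderiv : ∀ t, HasDerivAt g (g' t) t) (hcont' : Continuous g')
    (hper : Function.Periodic g T) (hmean : ∫ t in (0:ℝ)..T, g t = 0) :
    ∫ t in (0:ℝ)..T, (g t) ^ 2 ≤ (T / (2 * π)) ^ 2 * ∫ t in (0:ℝ)..T, (g' t) ^ 2 := by
  have h := wirtinger_complex (g := fun t => (g t : ℂ)) (g' := fun t => (g' t : ℂ)) hT
    (fun t => (hderiv t).ofReal_comp) (Complex.continuous_ofReal.comp hcont')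
    (fun t => by simp [hper t])
    (by rw [intervalIntegral.integral_ofReal, hmean, Complex.ofReal_zero])
  simpa only [Complex.norm_real, Real.norm_eq_abs, sq_abs] using h

lemma wirtinger_vector {H : Type*} [NormedAddCommGroup H] [InnerProductSpace ℝ H]
    [CompleteSpace H] {T : ℝ} (hT : 0 < T) {y y' : ℝ → H}
    (hderiv : ∀ t, HasDerivAt y (y' t) t) (hcont' : Continuous y')
    (hper : Function.Periodic y T) (hmean : ∫ t in (0:ℝ)..T, y t = 0) :
    ∫ t in (0:ℝ)..T, ‖y t‖ ^ 2 ≤ (T / (2 * π)) ^ 2 * ∫ t in (0:ℝ)..T, ‖y' t‖ ^ 2 := by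
  have hyc : Continuous y := continuous_iff_continuousAt.2 fun t => (hderiv t).continuousAt
  set K : Submodule ℝ H := (Submodule.span ℝ (Set.range y)).topologicalClosure with hK
  have hKclosed : IsClosed (K : Set H) := Submodule.isClosed_topologicalClosure _
  haveI : CompleteSpace K := hKclosed.completeSpace_coe
  have memK : ∀ t, y t ∈ K := fun t =>
    Submodule.le_topologicalClosure _ (Submodule.subset_span ⟨t, rfl⟩)
  have memK' : ∀ t, y' t ∈ K := by
    intro t
    have htend := hasDerivAt_iff_tendsto_slope.mp (hderiv t)
    refine hKclosed.mem_of_tendsto htend ?_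
    filter_upwards with u
    exact K.smul_mem _ (K.sub_mem (memK u) (memK t))
  haveI : TopologicalSpace.SeparableSpace K := by
    have h1 : TopologicalSpace.IsSeparable (K : Set H) := by
      rw [hK, Submodule.topologicalClosure_coe]
      exact ((TopologicalSpace.isSeparable_range hyc).span (R := ℝ)).closure
    exact h1.separableSpace
  obtain ⟨w, b, hb⟩ := exists_hilbertBasis ℝ K
  have hbc : ∀ i : w, (b i : K) = (i : K) := fun i => congrFun hb i
  have horth : Orthonormal ℝ (fun i : w => (b i : K)) := b.orthonormal
  -- countability of the basis index
  have hcw : w.Countable := by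
    have hdist : ∀ i ∈ w, ∀ j ∈ w, i ≠ j → (1:ℝ) ≤ dist i j := by
      intro i hi j hj hij
      have hne : (⟨i, hi⟩ : w) ≠ ⟨j, hj⟩ := fun hc => hij (congrArg Subtype.val hc)
      have h1 : ‖(b ⟨i, hi⟩ : K)‖ = 1 := horth.1 _
      have h2 : ‖(b ⟨j, hj⟩ : K)‖ = 1 := horth.1 _
      have h3 : (inner ℝ (b ⟨i, hi⟩ : K) (b ⟨j, hj⟩ : K) : ℝ) = 0 := horth.2 hne
      rw [hbc, hbc] at h3
      rw [hbc] at h1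
      rw [hbc] at h2
      have h1' : ‖i‖ = 1 := h1
      have h2' : ‖j‖ = 1 := h2
      have h3' : (inner ℝ i j : ℝ) = 0 := h3
      have h4 : ‖i - j‖ ^ 2 = 2 := by
        rw [norm_sub_sq_real, h1', h2', h3']; norm_num
      rw [dist_eq_norm]
      nlinarith [norm_nonneg (i - j)]
    refine Set.PairwiseDisjoint.countable_of_isOpen
      (s := fun v : K => Metric.ball v 2⁻¹) ?_ (fun i _ => Metric.isOpen_ball)
      (fun i _ => ⟨i, Metric.mem_ball_self (by norm_num)⟩)
    intro i hi j hj hij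
    have := hdist i hi j hj hij
    exact Metric.ball_disjoint_ball (by rw [dist_comm] at this ⊢; linarith)
  haveI : Countable w := hcw.to_subtype
  -- functions valued in K
  set z : ℝ → K := fun t => ⟨y t, memK t⟩ with hz
  set z' : ℝ → K := fun t => ⟨y' t, memK' t⟩ with hz'
  have hzc : Continuous z := hyc.subtype_mk _
  have hz'c : Continuous z' := hcont'.subtype_mk _
  have hzderiv : ∀ t, HasDerivAt z (z' t) t := by
    intro t
    rw [hasDerivAt_iff_tendsto_slope]
    rw [Topology.IsInducing.subtypeVal.tendsto_nhds_iff]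
    have hsl : Subtype.val ∘ slope z t = slope y t := by
      funext u
      simp only [Function.comp_apply, slope_def_module]
      push_cast
      rfl
    exact (hasDerivAt_iff_tendsto_slope.mp (hderiv t)).congr
      (fun u => (congrFun hsl u).symm)
  have hzper : Function.Periodic z T := fun t => Subtype.ext (hper t)
  have hzint : IntervalIntegrable z volume 0 T := hzc.intervalIntegrable 0 T
  have hzmean : ∫ t in (0:ℝ)..T, z t = 0 := by
    have h2 := K.subtypeL.intervalIntegral_comp_comm hzint
    have h3 : (∫ t in (0:ℝ)..T, K.subtypeL (z t)) = 0 := by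
      simp only [Submodule.subtypeL_apply]
      exact hmean
    rw [h3] at h2
    exact Subtype.val_injective (by simpa using h2.symm)
  -- scalar coordinate functions
  set g : w → ℝ → ℝ := fun i t => (inner ℝ (b i : K) (z t) : ℝ) with hg
  set g' : w → ℝ → ℝ := fun i t => (inner ℝ (b i : K) (z' t) : ℝ) with hg'
  have hgderiv : ∀ (i : w) (t : ℝ), HasDerivAt (g i) (g' i t) t := fun i t =>
    ((innerSL ℝ (b i)).hasFDerivAt).comp_hasDerivAt t (hzderiv t)
  have hg'cont : ∀ i : w, Continuous (g' i) := fun i => (innerSL ℝ (b i)).continuous.comp hz'c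
  have hgper : ∀ i : w, Function.Periodic (g i) T := fun i t => by
    simp only [hg]; rw [hzper t]
  have hgmean : ∀ i : w, ∫ t in (0:ℝ)..T, g i t = 0 := by
    intro i
    have h2 := (innerSL ℝ (b i)).intervalIntegral_comp_comm hzint
    rw [hzmean] at h2
    simpa [hg] using h2
  -- pointwise Parseval
  have hps : ∀ v : K, HasSum (fun i : w => (inner ℝ (b i : K) v : ℝ) ^ 2) (‖v‖ ^ 2) := by
    intro v
    have h1 := b.hasSum_inner_mul_inner v v
    have h2 : (inner ℝ v v : ℝ) = ‖v‖ ^ 2 := real_inner_self_eq_norm_sq v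
    rw [h2] at h1
    refine h1.congr_fun fun i => ?_
    rw [sq, real_inner_comm]
  -- ENNReal bookkeeping
  set μ : Measure ℝ := volume.restrict (Set.Ioc (0:ℝ) T) with hμ
  have hC0 : (0:ℝ) ≤ (T / (2 * π)) ^ 2 := sq_nonneg _
  have key : ∀ u : ℝ → K, Continuous u →
      ENNReal.ofReal (∫ t in (0:ℝ)..T, ‖u t‖ ^ 2)
        = ∑' i : w, ENNReal.ofReal (∫ t in (0:ℝ)..T, (inner ℝ (b i : K) (u t) : ℝ) ^ 2) := by
    intro u hu
    have hnn : 0 ≤ᵐ[μ] fun t => ‖u t‖ ^ 2 := Filter.Eventually.of_forall fun t => sq_nonneg _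
    have hint : Integrable (fun t => ‖u t‖ ^ 2) μ := (hu.norm.pow 2).integrableOn_Ioc
    rw [intervalIntegral.integral_of_le hT.le, ← hμ,
      ofReal_integral_eq_lintegral_ofReal hint hnn]
    have hci : ∀ i : w, Continuous fun t => (inner ℝ (b i : K) (u t) : ℝ) := fun i =>
      (innerSL ℝ (b i)).continuous.comp hu
    have hpt : ∀ t, ENNReal.ofReal (‖u t‖ ^ 2)
        = ∑' i : w, ENNReal.ofReal ((inner ℝ (b i : K) (u t) : ℝ) ^ 2) := by
      intro t
      rw [← (hps (u t)).tsum_eq]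
      exact ENNReal.ofReal_tsum_of_nonneg (fun i => sq_nonneg _) (hps (u t)).summable
    calc ∫⁻ t, ENNReal.ofReal (‖u t‖ ^ 2) ∂μ
        = ∫⁻ t, ∑' i : w, ENNReal.ofReal ((inner ℝ (b i : K) (u t) : ℝ) ^ 2) ∂μ :=
          lintegral_congr hpt
      _ = ∑' i : w, ∫⁻ t, ENNReal.ofReal ((inner ℝ (b i : K) (u t) : ℝ) ^ 2) ∂μ :=
          lintegral_tsum fun i =>
            ((((hci i).pow 2).measurable).ennreal_ofReal).aemeasurable
      _ = ∑' i : w, ENNReal.ofReal (∫ t in (0:ℝ)..T, (inner ℝ (b i : K) (u t) : ℝ) ^ 2) := by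
          refine tsum_congr fun i => ?_
          rw [intervalIntegral.integral_of_le hT.le, ← hμ,
            ofReal_integral_eq_lintegral_ofReal (show Integrable (fun t => (inner ℝ (b i : K) (u t) : ℝ) ^ 2) μ from ((hci i).pow 2).integrableOn_Ioc)
              (Filter.Eventually.of_forall fun t => sq_nonneg _)]
  have hyz : ∀ t : ℝ, ‖y t‖ = ‖z t‖ := fun t => rfl
  have hy'z : ∀ t : ℝ, ‖y' t‖ = ‖z' t‖ := fun t => rfl
  have hkey1 : ENNReal.ofReal (∫ t in (0:ℝ)..T, ‖y t‖ ^ 2)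
      = ∑' i : w, ENNReal.ofReal (∫ t in (0:ℝ)..T, g i t ^ 2) := by
    simp_rw [hyz]; exact key z hzc
  have hkey2 : ENNReal.ofReal (∫ t in (0:ℝ)..T, ‖y' t‖ ^ 2)
      = ∑' i : w, ENNReal.ofReal (∫ t in (0:ℝ)..T, g' i t ^ 2) := by
    simp_rw [hy'z]; exact key z' hz'c
  have hterm : ∀ i : w, ENNReal.ofReal (∫ t in (0:ℝ)..T, g i t ^ 2)
      ≤ ENNReal.ofReal ((T / (2 * π)) ^ 2) * ENNReal.ofReal (∫ t in (0:ℝ)..T, g' i t ^ 2) := by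
    intro i
    rw [← ENNReal.ofReal_mul hC0]
    exact ENNReal.ofReal_le_ofReal
      (wirtinger_real hT (hgderiv i) (hg'cont i) (hgper i) (hgmean i))
  have hmono : ENNReal.ofReal (∫ t in (0:ℝ)..T, ‖y t‖ ^ 2)
      ≤ ENNReal.ofReal ((T / (2 * π)) ^ 2 * ∫ t in (0:ℝ)..T, ‖y' t‖ ^ 2) := by
    rw [hkey1, ENNReal.ofReal_mul hC0, hkey2, ← ENNReal.tsum_mul_left]
    exact ENNReal.tsum_le_tsum hterm
  have hrhs0 : (0:ℝ) ≤ (T / (2 * π)) ^ 2 * ∫ t in (0:ℝ)..T, ‖y' t‖ ^ 2 :=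
    mul_nonneg hC0 (intervalIntegral.integral_nonneg hT.le fun u _ => sq_nonneg _)
  exact (ENNReal.ofReal_le_ofReal_iff hrhs0).mp hmono

/-- Key intermediate inequality in the Busenberg–Fisher–Martelli proof of Yorke's theorem:
for a `T`-periodic `C¹` solution `x` of `x' = f(x)` with `f` `L`-Lipschitz, for every `h > 0`,
`∫₀ᵀ ‖x(t+h)−x(t)‖² dt ≤ (LT/(2π))² ∫₀ᵀ ‖x(t+h)−x(t)‖² dt`; consequently if `x(·+h) ≠ x(·)`
for some `h > 0` then `LT ≥ 2π`. -/
theorem yorke_key_inequality {H : Type*} [NormedAddCommGroup H] [InnerProductSpace ℝ H]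
    [CompleteSpace H] (f : H → H) (L : ℝ) (hL : 0 < L)
    (hf : ∀ x y : H, ‖f x - f y‖ ≤ L * ‖x - y‖)
    (x : ℝ → H) (hx : ∀ t : ℝ, HasDerivAt x (f (x t)) t)
    (T : ℝ) (hT : 0 < T) (hper : Function.Periodic x T) :
    (∀ h : ℝ, 0 < h →
      (∫ t in (0 : ℝ)..T, ‖x (t + h) - x t‖ ^ 2) ≤
        (L * T / (2 * π)) ^ 2 * ∫ t in (0 : ℝ)..T, ‖x (t + h) - x t‖ ^ 2) ∧
    ((∃ h : ℝ, 0 < h ∧ ∃ t : ℝ, x (t + h) ≠ x t) → L * T ≥ 2 * π) := by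
  have hxc : Continuous x := continuous_iff_continuousAt.2 fun t => (hx t).continuousAt
  have hLip : LipschitzWith (Real.toNNReal L) f := by
    apply LipschitzWith.of_dist_le_mul
    intro a b
    rw [dist_eq_norm, dist_eq_norm, Real.coe_toNNReal L hL.le]
    exact hf a b
  have hfc : Continuous f := hLip.continuous
  -- main inequality valid for every h
  have part1 : ∀ h : ℝ,
      (∫ t in (0 : ℝ)..T, ‖x (t + h) - x t‖ ^ 2) ≤
        (L * T / (2 * π)) ^ 2 * ∫ t in (0 : ℝ)..T, ‖x (t + h) - x t‖ ^ 2 := by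
    intro h
    set y : ℝ → H := fun t => x (t + h) - x t with hy
    set y' : ℝ → H := fun t => f (x (t + h)) - f (x t) with hy'
    have hxhc : Continuous fun t : ℝ => x (t + h) :=
      hxc.comp (continuous_id.add continuous_const)
    have hyc : Continuous y := hxhc.sub hxc
    have hy'c : Continuous y' := (hfc.comp hxhc).sub (hfc.comp hxc)
    have hyderiv : ∀ t, HasDerivAt y (y' t) t := by
      intro t
      have h1 : HasDerivAt (fun s => x (s + h)) (f (x (t + h))) t := by
        have := HasDerivAt.scomp (𝕜 := ℝ) t (hx (t + h)) ((hasDerivAt_id t).add_const h)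
        simpa [Function.comp_def] using this
      exact h1.sub (hx t)
    have hyper : Function.Periodic y T := by
      intro t
      simp only [hy]
      rw [show t + T + h = t + h + T by ring, hper (t + h), hper t]
    have hymean : ∫ t in (0:ℝ)..T, y t = 0 := by
      have hi1 : IntervalIntegrable (fun t => x (t + h)) volume 0 T :=
        hxhc.intervalIntegrable 0 T
      have hi2 : IntervalIntegrable x volume 0 T := hxc.intervalIntegrable 0 T
      rw [hy]
      rw [intervalIntegral.integral_sub hi1 hi2]
      rw [intervalIntegral.integral_comp_add_right x h]
      rw [show (0:ℝ) + h = h by ring, show T + h = h + T by ring]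
      rw [hper.intervalIntegral_add_eq h 0, zero_add]
      exact sub_self _
    have hwir := wirtinger_vector hT hyderiv hy'c hyper hymean
    have hbound : ∫ t in (0:ℝ)..T, ‖y' t‖ ^ 2 ≤ L ^ 2 * ∫ t in (0:ℝ)..T, ‖y t‖ ^ 2 := by
      rw [← intervalIntegral.integral_const_mul]
      refine intervalIntegral.integral_mono_on hT.le
        ((hy'c.norm.pow 2).intervalIntegrable 0 T)
        ((continuous_const.mul (hyc.norm.pow 2)).intervalIntegrable 0 T) fun u _ => ?_
      have h1 : ‖y' u‖ ≤ L * ‖y u‖ := hf _ _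
      have h2 : ‖y' u‖ ^ 2 ≤ (L * ‖y u‖) ^ 2 :=
        pow_le_pow_left₀ (norm_nonneg _) h1 2
      calc ‖y' u‖ ^ 2 ≤ (L * ‖y u‖) ^ 2 := h2
        _ = L ^ 2 * ‖y u‖ ^ 2 := by ring
    calc ∫ t in (0:ℝ)..T, ‖y t‖ ^ 2
        ≤ (T / (2 * π)) ^ 2 * ∫ t in (0:ℝ)..T, ‖y' t‖ ^ 2 := hwir
      _ ≤ (T / (2 * π)) ^ 2 * (L ^ 2 * ∫ t in (0:ℝ)..T, ‖y t‖ ^ 2) :=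
          mul_le_mul_of_nonneg_left hbound (sq_nonneg _)
      _ = (L * T / (2 * π)) ^ 2 * ∫ t in (0:ℝ)..T, ‖y t‖ ^ 2 := by ring
  refine ⟨fun h _ => part1 h, ?_⟩
  rintro ⟨h, hh, t0, hne⟩
  by_contra hlt
  push_neg at hlt
  set y : ℝ → H := fun t => x (t + h) - x t with hy
  have hxhc : Continuous fun t : ℝ => x (t + h) :=
    hxc.comp (continuous_id.add continuous_const)
  have hyc : Continuous y := hxhc.sub hxc
  have hyper : Function.Periodic y T := by
    intro t
    simp only [hy]
    rw [show t + T + h = t + h + T by ring, hper (t + h), hper t]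
  set F : ℝ → ℝ := fun t => ‖y t‖ ^ 2 with hF
  have hFc : Continuous F := hyc.norm.pow 2
  have hFper : Function.Periodic F T := fun t => by simp only [hF]; rw [hyper t]
  have hF0 : ∀ t, 0 ≤ F t := fun t => sq_nonneg _
  -- the integral is zero
  have hI := part1 h
  have hInn : 0 ≤ ∫ t in (0:ℝ)..T, F t :=
    intervalIntegral.integral_nonneg hT.le fun u _ => hF0 u
  have hCl : (L * T / (2 * π)) ^ 2 < 1 := by
    have h1 : 0 ≤ L * T := mul_nonneg hL.le hT.le
    have h2 : L * T / (2 * π) < 1 := by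
      rw [div_lt_one (by positivity)]
      exact hlt
    nlinarith [div_nonneg h1 (by positivity : (0:ℝ) ≤ 2 * π)]
  have hIzero : ∫ t in (0:ℝ)..T, F t = 0 := by nlinarith
  -- hence y vanishes identically, contradiction
  have hyt0 : y t0 ≠ 0 := sub_ne_zero.mpr hne
  obtain ⟨t1, ht1, hfeq⟩ := hFper.exists_mem_Ico₀ hT t0
  have hc : 0 < F t1 := by
    rw [← hfeq, hF]
    have : ‖y t0‖ ≠ 0 := norm_ne_zero_iff.mpr hyt0
    positivity
  set μ : Measure ℝ := volume.restrict (Set.Ioc (0:ℝ) T) with hμ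
  have hae : F =ᵐ[μ] 0 := by
    rw [intervalIntegral.integral_of_le hT.le] at hIzero
    exact (integral_eq_zero_iff_of_nonneg hF0 (hFc.integrableOn_Ioc)).mp hIzero
  have hN : μ {u | F u ≠ 0} = 0 := hae
  have hev : ∀ᶠ u in nhds t1, F u > F t1 / 2 :=
    hFc.continuousAt.preimage_mem_nhds (Ioi_mem_nhds (by linarith))
  obtain ⟨δ, hδ, hball⟩ := Metric.eventually_nhds_iff.mp hev
  set δ' : ℝ := min δ (T - t1) with hδ'
  have hδ'0 : 0 < δ' := lt_min hδ (by linarith [ht1.2])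
  have hsub : Set.Ioo t1 (t1 + δ') ⊆ {u | F u ≠ 0} := by
    intro u hu
    have h1 : dist u t1 < δ := by
      rw [Real.dist_eq, abs_of_pos (by linarith [hu.1])]
      have := hu.2
      have : u - t1 < δ' := by linarith
      exact lt_of_lt_of_le this (min_le_left _ _)
    have := hball h1
    simp only [Set.mem_setOf_eq]
    intro hzero
    rw [hzero] at this
    linarith
  have hsubIoc : Set.Ioo t1 (t1 + δ') ⊆ Set.Ioc 0 T := by
    intro u hu
    constructor
    · linarith [ht1.1, hu.1]
    · have h2 : δ' ≤ T - t1 := min_le_right _ _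
      have := hu.2
      linarith
  have hzeroU : μ (Set.Ioo t1 (t1 + δ')) = 0 := measure_mono_null hsub hN
  rw [hμ, Measure.restrict_apply measurableSet_Ioo,
    Set.inter_eq_self_of_subset_left hsubIoc, Real.volume_Ioo] at hzeroU
  simp only [ENNReal.ofReal_eq_zero] at hzeroU
  linarith
end
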